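/- Let p ∈ (1,2) and a > 0, and let ψ : [0,1) → [0,∞) be continuously differentiable with ψ(0) = 0, ψ(y) > 0 for y ∈ (0,1), satisfying ψ'(y) + (p/(p-1)) ψ(y)^{(p-1)/p} = (p a^{2-p}/(p-1))(1-y) for all y ∈ (0,1). Then: (i) there exists y_a ∈ (0,1) such that ψ'(y_a) = 0 and ψ'(y)(y-y_a) < 0 for every y ∈ (0,1) \ {y_a} (i.e. ψ is strictly increasing on (0,y_a) and strictly decreasing on (y_a,1)); (ii) ψ(y) has a limit ℓ ≥ 0 as y → 1; (iii) ψ(y) ≥ a^{p(2-p)/(p-1)} (1-y)^{p/(p-1)} for all y ∈ (y_a,1). -/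

import Mathlib

open Set Filter Topology

/-- `ψ : [0,1) → [0,∞)` is continuously differentiable (with derivative `ψd`), `ψ(0) = 0`,
and `ψ' + (p/(p-1)) ψ^{(p-1)/p} = (p a^{2-p}/(p-1))(1-y)` holds on `(0,1)`. -/
def PsiSol (p a : ℝ) (ψ ψd : ℝ → ℝ) : Prop :=
  (∀ y ∈ Set.Ico (0:ℝ) 1, HasDerivWithinAt ψ (ψd y) (Set.Ico 0 1) y) ∧
  ContinuousOn ψd (Set.Ico 0 1) ∧
  (∀ y ∈ Set.Ico (0:ℝ) 1, 0 ≤ ψ y) ∧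
  ψ 0 = 0 ∧
  (∀ y ∈ Set.Ioo (0:ℝ) 1,
    ψd y + (p/(p-1)) * ψ y ^ ((p-1)/p) = (p * a ^ (2-p) / (p-1)) * (1-y))

noncomputable def gfun (p a y : ℝ) : ℝ := a ^ (p*(2-p)/(p-1)) * (1-y) ^ (p/(p-1))

section aux
variable {p a : ℝ} (hp1 : 1 < p) (hp2 : p < 2) (ha : 0 < a)

include hp1 ha in
lemma key_alg {y : ℝ} (hy : y ≤ 1) :
    (p/(p-1)) * (gfun p a y) ^ ((p-1)/p) = (p * a ^ (2-p) / (p-1)) * (1-y) := by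
  have hA : (0:ℝ) ≤ a ^ (p*(2-p)/(p-1)) := (Real.rpow_pos_of_pos ha _).le
  have h1y : (0:ℝ) ≤ 1 - y := by linarith
  have hp0 : (0:ℝ) < p := lt_trans one_pos hp1
  have hpm : (0:ℝ) < p - 1 := sub_pos.mpr hp1
  have e1 : (gfun p a y) ^ ((p-1)/p)
      = a ^ (2-p) * (1-y) := by
    rw [gfun, Real.mul_rpow hA (Real.rpow_nonneg h1y _)]
    rw [← Real.rpow_mul ha.le, ← Real.rpow_mul h1y]
    rw [show p*(2-p)/(p-1)*((p-1)/p) = 2-p by field_simp,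
       show p/(p-1) * ((p-1)/p) = 1 by field_simp, Real.rpow_one]
  rw [e1]; field_simp

include ha in
lemma gfun_pos {y : ℝ} (hy : y < 1) : 0 < gfun p a y :=
  mul_pos (Real.rpow_pos_of_pos ha _) (Real.rpow_pos_of_pos (by linarith) _)

include hp1 in
lemma gfun_hasDeriv (y : ℝ) :
    HasDerivAt (gfun p a) (a ^ (p*(2-p)/(p-1)) * (-1 * (p/(p-1)) * (1-y) ^ (p/(p-1) - 1))) y := by
  have hβ : (1:ℝ) ≤ p/(p-1) := by
    rw [le_div_iff₀ (sub_pos.mpr hp1)]; linarith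
  have h1 : HasDerivAt (fun y : ℝ => 1 - y) (-1) y := by
    simpa using (hasDerivAt_id y).const_sub 1
  exact (h1.rpow_const (Or.inr hβ)).const_mul _

include hp1 hp2 ha in
lemma gfun_deriv_neg {y : ℝ} (hy : y < 1) :
    a ^ (p*(2-p)/(p-1)) * (-1 * (p/(p-1)) * (1-y) ^ (p/(p-1) - 1)) < 0 := by
  have hpm : (0:ℝ) < p - 1 := sub_pos.mpr hp1
  have := Real.rpow_pos_of_pos (show (0:ℝ) < 1 - y by linarith) (p/(p-1) - 1)
  have hA := Real.rpow_pos_of_pos ha (p*(2-p)/(p-1))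
  have hβ : 0 < p/(p-1) := div_pos (by linarith) hpm
  nlinarith [mul_pos hA (mul_pos hβ this)]

include hp1 in
lemma gfun_cont : Continuous (gfun p a) := by
  have hβ : (0:ℝ) ≤ p/(p-1) := le_of_lt (div_pos (by linarith) (sub_pos.mpr hp1))
  exact continuous_const.mul
    ((Real.continuous_rpow_const hβ).comp (continuous_const.sub continuous_id))

end aux

/-- **Shape of `ψ`.** If moreover `ψ > 0` on `(0,1)`, then: (i) there is
`y_a ∈ (0,1)` with `ψ'(y_a) = 0` and `ψ'(y)(y-y_a) < 0` for `y ∈ (0,1) \ {y_a}`, and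
(iii) `ψ(y) ≥ a^{p(2-p)/(p-1)} (1-y)^{p/(p-1)}` for `y ∈ (y_a,1)`; (ii) `ψ(y)` has a
limit `ℓ ≥ 0` as `y → 1`. -/
theorem stmt7 (p a : ℝ) (hp : p ∈ Set.Ioo (1:ℝ) 2) (ha : 0 < a)
    (ψ ψd : ℝ → ℝ) (hψ : PsiSol p a ψ ψd)
    (hpos : ∀ y ∈ Set.Ioo (0:ℝ) 1, 0 < ψ y) :
    (∃ ya ∈ Set.Ioo (0:ℝ) 1,
      ψd ya = 0 ∧
      (∀ y ∈ Set.Ioo (0:ℝ) 1, y ≠ ya → ψd y * (y - ya) < 0) ∧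
      (∀ y ∈ Set.Ioo ya 1, a ^ (p*(2-p)/(p-1)) * (1-y) ^ (p/(p-1)) ≤ ψ y)) ∧
    (∃ ℓ : ℝ, 0 ≤ ℓ ∧ Tendsto ψ (𝓝[<] (1:ℝ)) (𝓝 ℓ)) := by
  obtain ⟨hp1, hp2⟩ := hp
  obtain ⟨hderiv, hcont, hnn, h0, hode⟩ := hψ
  have hpm : (0:ℝ) < p - 1 := sub_pos.mpr hp1
  have hK : (0:ℝ) < p/(p-1) := div_pos (by linarith) hpm
  have hα : (0:ℝ) < (p-1)/p := div_pos hpm (by linarith)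
  have hψderiv : ∀ y ∈ Ioo (0:ℝ) 1, HasDerivAt ψ (ψd y) y := fun y hy =>
    (hderiv y ⟨hy.1.le, hy.2⟩).hasDerivAt (Ico_mem_nhds hy.1 hy.2)
  have hψcont : ContinuousOn ψ (Ico 0 1) := fun y hy => (hderiv y hy).continuousWithinAt
  have hode' : ∀ y ∈ Ioo (0:ℝ) 1,
      ψd y = (p/(p-1)) * (gfun p a y ^ ((p-1)/p)) - (p/(p-1)) * (ψ y ^ ((p-1)/p)) := by
    intro y hy
    have h1 := hode y hy
    have h2 := key_alg hp1 ha (le_of_lt hy.2)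
    linarith
  have sgn_pos : ∀ y ∈ Ioo (0:ℝ) 1, ψ y < gfun p a y → 0 < ψd y := by
    intro y hy h
    have h2 : ψ y ^ ((p-1)/p) < gfun p a y ^ ((p-1)/p) :=
      Real.rpow_lt_rpow (hnn y ⟨hy.1.le, hy.2⟩) h hα
    have h3 := hode' y hy
    nlinarith
  have sgn_nonneg : ∀ y ∈ Ioo (0:ℝ) 1, ψ y ≤ gfun p a y → 0 ≤ ψd y := by
    intro y hy h
    have h2 : ψ y ^ ((p-1)/p) ≤ gfun p a y ^ ((p-1)/p) :=
      Real.rpow_le_rpow (hnn y ⟨hy.1.le, hy.2⟩) h hα.le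
    have h3 := hode' y hy
    nlinarith
  have sgn_neg : ∀ y ∈ Ioo (0:ℝ) 1, gfun p a y < ψ y → ψd y < 0 := by
    intro y hy h
    have h2 : gfun p a y ^ ((p-1)/p) < ψ y ^ ((p-1)/p) :=
      Real.rpow_lt_rpow (gfun_pos ha hy.2).le h hα
    have h3 := hode' y hy
    nlinarith
  have sgn_zero : ∀ y ∈ Ioo (0:ℝ) 1, ψ y = gfun p a y → ψd y = 0 := by
    intro y hy h
    have h3 := hode' y hy
    rw [h] at h3; linarith
  -- Step A: somewhere ψ catches up with g
  have stepA : ∃ y₁ ∈ Ioo (0:ℝ) 1, gfun p a y₁ ≤ ψ y₁ := by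
    by_contra hcon
    push_neg at hcon
    have hmono : StrictMonoOn ψ (Ico 0 1) := by
      apply strictMonoOn_of_deriv_pos (convex_Ico 0 1) hψcont
      intro x hx
      rw [interior_Ico] at hx
      rw [(hψderiv x hx).deriv]
      exact sgn_pos x hx (hcon x hx)
    have hc : 0 < ψ (1/2) := hpos (1/2) (by norm_num)
    have hg1 : Tendsto (gfun p a) (𝓝[<] (1:ℝ)) (𝓝 0) := by
      have h1 : Tendsto (gfun p a) (𝓝 (1:ℝ)) (𝓝 (gfun p a 1)) := (gfun_cont hp1).continuousAt
      have hg10 : gfun p a 1 = 0 := by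
        rw [gfun]; norm_num [Real.zero_rpow hK.ne']
      rw [hg10] at h1
      exact h1.mono_left nhdsWithin_le_nhds
    have hev : ∀ᶠ y in 𝓝[<] (1:ℝ), gfun p a y < ψ (1/2) := hg1.eventually_lt_const hc
    have hev2 : ∀ᶠ y in 𝓝[<] (1:ℝ), y ∈ Ioo (1/2:ℝ) 1 := Ioo_mem_nhdsLT (by norm_num)
    obtain ⟨y, hy1, hy2⟩ := (hev.and hev2).exists
    have hyI : y ∈ Ioo (0:ℝ) 1 := ⟨by linarith [hy2.1], hy2.2⟩
    have hmle : ψ (1/2) ≤ ψ y :=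
      (hmono.monotoneOn) ⟨by norm_num, by norm_num⟩ ⟨hyI.1.le, hyI.2⟩ hy2.1.le
    have := hcon y hyI
    linarith
  obtain ⟨y₁, hy₁, hgy₁⟩ := stepA
  -- Step B : first touching point ya
  set T : Set ℝ := Icc 0 y₁ ∩ (fun y => ψ y - gfun p a y) ⁻¹' Ici 0 with hT
  have hsub1 : Icc (0:ℝ) y₁ ⊆ Ico 0 1 := fun x hx => ⟨hx.1, lt_of_le_of_lt hx.2 hy₁.2⟩
  have hTclosed : IsClosed T :=
    ContinuousOn.preimage_isClosed_of_isClosed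
      ((hψcont.mono hsub1).sub ((gfun_cont hp1).continuousOn)) isClosed_Icc isClosed_Ici
  have hTne : T.Nonempty := ⟨y₁, ⟨hy₁.1.le, le_refl _⟩, by simp only [mem_preimage, mem_Ici]; linarith⟩
  have hTbdd : BddBelow T := ⟨0, fun x hx => hx.1.1⟩
  set ya := sInf T with hya
  have hyaT : ya ∈ T := hTclosed.csInf_mem hTne hTbdd
  have hya0 : 0 < ya := by
    rcases lt_or_eq_of_le hyaT.1.1 with h | h
    · exact h
    · exfalso
      have h2 : (0:ℝ) ≤ ψ ya - gfun p a ya := hyaT.2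
      rw [← h] at h2
      have hg0 : 0 < gfun p a 0 := gfun_pos ha (by norm_num)
      rw [h0] at h2; linarith
  have hya1 : ya < 1 := lt_of_le_of_lt hyaT.1.2 hy₁.2
  have hyaIoo : ya ∈ Ioo (0:ℝ) 1 := ⟨hya0, hya1⟩
  have hbefore : ∀ y, 0 ≤ y → y < ya → ψ y - gfun p a y < 0 := by
    intro y hy0 hyya
    by_contra hcge
    push_neg at hcge
    have hyT : y ∈ T := ⟨⟨hy0, le_trans hyya.le hyaT.1.2⟩, by simpa using hcge⟩
    exact absurd (csInf_le hTbdd hyT) (not_le.mpr hyya)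
  have hyaeq : ψ ya = gfun p a ya := by
    have hge : (0:ℝ) ≤ ψ ya - gfun p a ya := hyaT.2
    have hle : ψ ya - gfun p a ya ≤ 0 := by
      have hF : ContinuousWithinAt (fun y => ψ y - gfun p a y) (Ico 0 1) ya :=
        (hψcont.sub (gfun_cont hp1).continuousOn) ya ⟨hya0.le, hya1⟩
      have hne : (𝓝[Ioo (0:ℝ) ya] ya).NeBot := by
        apply mem_closure_iff_nhdsWithin_neBot.mp
        rw [closure_Ioo (ne_of_lt hya0)]
        exact ⟨hya0.le, le_refl _⟩
      have htend : Tendsto (fun y => ψ y - gfun p a y) (𝓝[Ioo (0:ℝ) ya] ya)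
          (𝓝 (ψ ya - gfun p a ya)) :=
        hF.tendsto.mono_left (nhdsWithin_mono _ (fun x hx => ⟨hx.1.le, lt_trans hx.2 hya1⟩))
      exact le_of_tendsto htend
        (eventually_nhdsWithin_of_forall fun x hx => (hbefore x hx.1.le hx.2).le)
    linarith
  -- Step C : ψ > g strictly after ya
  have negcase : ∀ b ∈ Ioo ya 1, ¬ (ψ b - gfun p a b < 0) := by
    intro b hb hneg
    set S : Set ℝ := Icc ya b ∩ (fun y => ψ y - gfun p a y) ⁻¹' Ici 0 with hS
    have hsub2 : Icc ya b ⊆ Ico 0 1 := fun x hx =>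
      ⟨le_trans hya0.le hx.1, lt_of_le_of_lt hx.2 hb.2⟩
    have hSclosed : IsClosed S := ContinuousOn.preimage_isClosed_of_isClosed
      ((hψcont.mono hsub2).sub ((gfun_cont hp1).continuousOn)) isClosed_Icc isClosed_Ici
    have hSne : S.Nonempty := ⟨ya, ⟨le_refl _, hb.1.le⟩,
      by simp only [mem_preimage, mem_Ici]; rw [hyaeq]; simp⟩
    have hSbdd : BddAbove S := ⟨b, fun x hx => hx.1.2⟩
    set c := sSup S with hc
    have hcS : c ∈ S := hSclosed.csSup_mem hSne hSbdd
    have hc0 : (0:ℝ) ≤ ψ c - gfun p a c := hcS.2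
    have hcb : c < b := by
      rcases lt_or_eq_of_le hcS.1.2 with h | h
      · exact h
      · exfalso; rw [h] at hc0; linarith
    have hafter : ∀ y ∈ Ioc c b, ψ y - gfun p a y < 0 := by
      intro y hy
      by_contra hcge; push_neg at hcge
      have hyS : y ∈ S := ⟨⟨le_trans hcS.1.1 hy.1.le, hy.2⟩, by simpa using hcge⟩
      exact absurd (le_csSup hSbdd hyS) (not_le.mpr hy.1)
    have hmono : StrictMonoOn (fun y => ψ y - gfun p a y) (Icc c b) := by
      apply strictMonoOn_of_deriv_pos (convex_Icc c b)
      · exact (hψcont.mono (fun x hx => hsub2 ⟨le_trans hcS.1.1 hx.1, hx.2⟩)).sub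
          (gfun_cont hp1).continuousOn
      · intro x hx
        rw [interior_Icc] at hx
        have hxI : x ∈ Ioo (0:ℝ) 1 :=
          ⟨lt_of_lt_of_le hya0 (le_trans hcS.1.1 hx.1.le), lt_trans hx.2 hb.2⟩
        have hDF : HasDerivAt (fun y => ψ y - gfun p a y)
            (ψd x - a ^ (p*(2-p)/(p-1)) * (-1 * (p/(p-1)) * (1-x) ^ (p/(p-1) - 1))) x :=
          (hψderiv x hxI).sub (gfun_hasDeriv hp1 x)
        rw [hDF.deriv]
        have h1 : 0 ≤ ψd x :=
          sgn_nonneg x hxI (by have := hafter x ⟨hx.1, hx.2.le⟩; linarith)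
        have h2 := gfun_deriv_neg hp1 hp2 ha hxI.2
        linarith
    have hlt := hmono ⟨le_refl _, hcb.le⟩ ⟨hcb.le, le_refl _⟩ hcb
    simp only at hlt
    linarith
  have poscase : ∀ b ∈ Ioo ya 1, 0 < ψ b - gfun p a b := by
    intro b hb
    rcases lt_trichotomy (ψ b - gfun p a b) 0 with h | h | h
    · exact absurd h (negcase b hb)
    · exfalso
      have hbI : b ∈ Ioo (0:ℝ) 1 := ⟨lt_trans hya0 hb.1, hb.2⟩
      have hψdb : ψd b = 0 := sgn_zero b hbI (by linarith)
      have hDF : HasDerivAt (fun y => ψ y - gfun p a y)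
          (ψd b - a ^ (p*(2-p)/(p-1)) * (-1 * (p/(p-1)) * (1-b) ^ (p/(p-1) - 1))) b :=
        (hψderiv b hbI).sub (gfun_hasDeriv hp1 b)
      have hGneg := gfun_deriv_neg hp1 hp2 ha (y := b) hbI.2
      have hpos' : 0 < ψd b - a ^ (p*(2-p)/(p-1)) * (-1 * (p/(p-1)) * (1-b) ^ (p/(p-1) - 1)) := by
        linarith
      have hslope := hasDerivAt_iff_tendsto_slope.mp hDF
      have hev : ∀ᶠ y in 𝓝[≠] b, 0 < slope (fun y => ψ y - gfun p a y) b y :=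
        hslope.eventually (eventually_gt_nhds hpos')
      have hev2 : ∀ᶠ y in 𝓝[<] b, 0 < slope (fun y => ψ y - gfun p a y) b y :=
        hev.filter_mono (nhdsWithin_mono _ (fun x hx => ne_of_lt hx))
      have hev3 : ∀ᶠ y in 𝓝[<] b, y ∈ Ioo ya b := Ioo_mem_nhdsLT hb.1
      obtain ⟨y, hy1, hy2⟩ := (hev2.and hev3).exists
      rw [slope_def_field] at hy1
      have hnum : ψ y - gfun p a y < 0 := by
        by_contra hge; push_neg at hge
        have hdnp : ((ψ y - gfun p a y) - (ψ b - gfun p a b)) / (y - b) ≤ 0 :=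
          div_nonpos_of_nonneg_of_nonpos (by linarith) (by linarith [hy2.2])
        linarith
      exact negcase y ⟨hy2.1, lt_trans hy2.2 hb.2⟩ hnum
    · exact h
  have hψdneg : ∀ y ∈ Ioo ya 1, ψd y < 0 := fun y hy =>
    sgn_neg y ⟨lt_trans hya0 hy.1, hy.2⟩ (by linarith [poscase y hy])
  have hψdpos : ∀ y ∈ Ioo (0:ℝ) 1, y < ya → 0 < ψd y := fun y hy hlt =>
    sgn_pos y hy (by linarith [hbefore y hy.1.le hlt])
  constructor
  · refine ⟨ya, hyaIoo, sgn_zero ya hyaIoo hyaeq, ?_, ?_⟩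
    · intro y hy hne
      rcases lt_or_gt_of_ne hne with h | h
      · exact mul_neg_of_pos_of_neg (hψdpos y hy h) (by linarith)
      · exact mul_neg_of_neg_of_pos (hψdneg y ⟨h, hy.2⟩) (by linarith)
    · intro y hy
      have h2 : gfun p a y ≤ ψ y := by linarith [poscase y hy]
      simpa [gfun] using h2
  · have hanti : StrictAntiOn ψ (Ioo ya 1) := by
      apply strictAntiOn_of_deriv_neg (convex_Ioo ya 1)
      · exact hψcont.mono (fun x hx => ⟨le_trans hya0.le hx.1.le, hx.2⟩)
      · intro x hx
        rw [interior_Ioo] at hx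
        rw [(hψderiv x ⟨lt_trans hya0 hx.1, hx.2⟩).deriv]
        exact hψdneg x hx
    have hne : (Ioo ya 1).Nonempty := nonempty_Ioo.mpr hya1
    have hbdd : BddBelow (ψ '' Ioo ya 1) := by
      refine ⟨0, fun z hz => ?_⟩
      obtain ⟨x, hx, rfl⟩ := hz
      exact hnn x ⟨le_trans hya0.le hx.1.le, hx.2⟩
    refine ⟨sInf (ψ '' Ioo ya 1), ?_,
      hanti.antitoneOn.tendsto_nhdsWithin_Ioo_left hne hbdd⟩
    refine le_csInf (hne.image _) (fun z hz => ?_)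
    obtain ⟨x, hx, rfl⟩ := hz
    exact hnn x ⟨le_trans hya0.le hx.1.le, hx.2⟩
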